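/- arXiv:2206.13482 — 2 statements merged into one kernel-verified Lean document; each statement's English description precedes it below -/
import Mathlib

section
/- Suppose k < n, A ∈ ℝ^{n×n} is invertible, and Z ∈ ℝ^{n×k} is such that Z Z^T + A is invertible. Then Z^T (Z Z^T + A)^{-2} Z = (I_k + Z^T A^{-1} Z)^{-1} Z^T A^{-2} Z (I_k + Z^T A^{-1} Z)^{-1}. -/
open scoped Matrix

theorem zzt_A_inverse_identity {n k : ℕ} (hk : k < n)
    (A : Matrix (Fin n) (Fin n) ℝ) (hA : IsUnit A)
    (Z : Matrix (Fin n) (Fin k) ℝ) (hZA : IsUnit (Z * Zᵀ + A)) :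
    Zᵀ * ((Z * Zᵀ + A)⁻¹ * (Z * Zᵀ + A)⁻¹) * Z =
      (1 + Zᵀ * A⁻¹ * Z)⁻¹ * (Zᵀ * (A⁻¹ * A⁻¹) * Z) * (1 + Zᵀ * A⁻¹ * Z)⁻¹ := by
  have hAdet : IsUnit A.det := A.isUnit_iff_isUnit_det.mp hA
  have hBdet : IsUnit (Z * Zᵀ + A).det := (Z * Zᵀ + A).isUnit_iff_isUnit_det.mp hZA
  have hAinv : A * A⁻¹ = 1 := Matrix.mul_nonsing_inv A hAdet
  have hAinv' : A⁻¹ * A = 1 := Matrix.nonsing_inv_mul A hAdet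
  have hA1 : ∀ (M : Matrix (Fin n) (Fin k) ℝ), A * (A⁻¹ * M) = M := fun M => by
    rw [← Matrix.mul_assoc, hAinv, Matrix.one_mul]
  have hA1' : ∀ (M : Matrix (Fin k) (Fin n) ℝ), M * (A⁻¹ * A) = M := fun M => by
    rw [hAinv', Matrix.mul_one]
  set C : Matrix (Fin k) (Fin k) ℝ := 1 + Zᵀ * A⁻¹ * Z with hCdef
  have hCdet : IsUnit C.det := by
    have h1 : C.det = (1 + A⁻¹ * Z * Zᵀ).det := by
      rw [hCdef, Matrix.mul_assoc, Matrix.det_one_add_mul_comm]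
    have h2 : (1 : Matrix (Fin n) (Fin n) ℝ) + A⁻¹ * Z * Zᵀ = A⁻¹ * (Z * Zᵀ + A) := by
      rw [Matrix.mul_add, hAinv', Matrix.mul_assoc]
      exact add_comm _ _
    have h3 : IsUnit A⁻¹.det := by
      rw [Matrix.det_nonsing_inv]
      exact hAdet.ringInverse
    rw [h1, h2, Matrix.det_mul]
    exact h3.mul hBdet
  have hCinv : C * C⁻¹ = 1 := Matrix.mul_nonsing_inv C hCdet
  have hCinv' : C⁻¹ * C = 1 := Matrix.nonsing_inv_mul C hCdet
  have e1 : (Z * Zᵀ + A) * (A⁻¹ * Z) = Z * C := by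
    rw [hCdef]
    simp only [Matrix.add_mul, Matrix.mul_add, Matrix.one_mul, Matrix.mul_one,
      Matrix.mul_assoc, hA1]
    exact add_comm _ _
  have e2 : (Zᵀ * A⁻¹) * (Z * Zᵀ + A) = C * Zᵀ := by
    rw [hCdef]
    simp only [Matrix.add_mul, Matrix.mul_add, Matrix.one_mul, Matrix.mul_one,
      Matrix.mul_assoc, hAinv']
    exact add_comm _ _
  have hBZ : (Z * Zᵀ + A)⁻¹ * Z = A⁻¹ * Z * C⁻¹ := by
    have key : (Z * Zᵀ + A) * (A⁻¹ * Z * C⁻¹) = Z := by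
      rw [← Matrix.mul_assoc, e1, Matrix.mul_assoc, hCinv, Matrix.mul_one]
    calc (Z * Zᵀ + A)⁻¹ * Z
        = (Z * Zᵀ + A)⁻¹ * ((Z * Zᵀ + A) * (A⁻¹ * Z * C⁻¹)) := by rw [key]
      _ = A⁻¹ * Z * C⁻¹ := by
          rw [← Matrix.mul_assoc, Matrix.nonsing_inv_mul _ hBdet, Matrix.one_mul]
  have hZB : Zᵀ * (Z * Zᵀ + A)⁻¹ = C⁻¹ * Zᵀ * A⁻¹ := by
    have key : (C⁻¹ * (Zᵀ * A⁻¹)) * (Z * Zᵀ + A) = Zᵀ := by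
      rw [Matrix.mul_assoc, e2, ← Matrix.mul_assoc, hCinv', Matrix.one_mul]
    calc Zᵀ * (Z * Zᵀ + A)⁻¹
        = ((C⁻¹ * (Zᵀ * A⁻¹)) * (Z * Zᵀ + A)) * (Z * Zᵀ + A)⁻¹ := by rw [key]
      _ = C⁻¹ * Zᵀ * A⁻¹ := by
          rw [Matrix.mul_assoc, Matrix.mul_nonsing_inv _ hBdet, Matrix.mul_one,
            ← Matrix.mul_assoc]
  calc Zᵀ * ((Z * Zᵀ + A)⁻¹ * (Z * Zᵀ + A)⁻¹) * Z
      = (Zᵀ * (Z * Zᵀ + A)⁻¹) * ((Z * Zᵀ + A)⁻¹ * Z) := by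
        simp only [Matrix.mul_assoc]
    _ = (C⁻¹ * Zᵀ * A⁻¹) * (A⁻¹ * Z * C⁻¹) := by rw [hBZ, hZB]
    _ = C⁻¹ * (Zᵀ * (A⁻¹ * A⁻¹) * Z) * C⁻¹ := by
        simp only [Matrix.mul_assoc]
end

section
/- Let x ∈ ℝ^n be a nonzero vector and A₋ ∈ ℝ^{n×n} a symmetric positive definite matrix, and set A = x x^T + A₋. Then x^T A^{-2} x = (x^T A₋^{-2} x) / (1 + x^T A₋^{-1} x)^2, and consequently x^T A^{-2} x ≤ (x^T A₋^{-2} x) / (x^T A₋^{-1} x)^2. -/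
open scoped Matrix

lemma vecMulVec_mulVec' {n : ℕ} (x y z : Fin n → ℝ) :
    (Matrix.vecMulVec x y).mulVec z = (y ⬝ᵥ z) • x := by
  ext i
  simp only [Matrix.mulVec, Matrix.vecMulVec_apply, dotProduct, Pi.smul_apply,
    smul_eq_mul, Finset.sum_mul, Finset.mul_sum]
  exact Finset.sum_congr rfl fun j _ => by ring

lemma dotProduct_self_nonneg' {n : ℕ} (v : Fin n → ℝ) : 0 ≤ v ⬝ᵥ v :=
  Finset.sum_nonneg fun i _ => mul_self_nonneg _

lemma posSemidef_vecMulVec_self {n : ℕ} (x : Fin n → ℝ) :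
    (Matrix.vecMulVec x x).PosSemidef := by
  have h := Matrix.posSemidef_vecMulVec_self_star x
  rwa [star_trivial] at h

theorem sherman_morrison_quadratic_form {n : ℕ} (x : Fin n → ℝ) (hx : x ≠ 0)
    (Am : Matrix (Fin n) (Fin n) ℝ) (hAm : Am.PosDef) :
    x ⬝ᵥ (((Matrix.vecMulVec x x + Am)⁻¹ * (Matrix.vecMulVec x x + Am)⁻¹).mulVec x) =
      (x ⬝ᵥ ((Am⁻¹ * Am⁻¹).mulVec x)) / (1 + x ⬝ᵥ (Am⁻¹.mulVec x)) ^ 2 ∧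
    x ⬝ᵥ (((Matrix.vecMulVec x x + Am)⁻¹ * (Matrix.vecMulVec x x + Am)⁻¹).mulVec x) ≤
      (x ⬝ᵥ ((Am⁻¹ * Am⁻¹).mulVec x)) / (x ⬝ᵥ (Am⁻¹.mulVec x)) ^ 2 := by
  set A := Matrix.vecMulVec x x + Am with hAdef
  have hA : A.PosDef := Matrix.PosDef.posSemidef_add (posSemidef_vecMulVec_self x) hAm
  have hAu : IsUnit A.det := hA.det_pos.ne'.isUnit
  have hAmu : IsUnit Am.det := hAm.det_pos.ne'.isUnit
  set c : ℝ := x ⬝ᵥ (Am⁻¹.mulVec x) with hc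
  have hcpos : 0 < c := by
    have := hAm.inv.dotProduct_mulVec_pos (x := x) (by simpa using hx)
    simpa using this
  have h1c : (1 : ℝ) + c ≠ 0 := by positivity
  have key : A.mulVec (Am⁻¹.mulVec x) = (1 + c) • x := by
    rw [hAdef, Matrix.add_mulVec, vecMulVec_mulVec', Matrix.mulVec_mulVec,
      Am.mul_nonsing_inv hAmu, Matrix.one_mulVec, add_smul, one_smul, add_comm]
  have hAinvx : A⁻¹.mulVec x = (1 + c)⁻¹ • Am⁻¹.mulVec x := by
    calc A⁻¹.mulVec x = A⁻¹.mulVec ((1 + c)⁻¹ • ((1 + c) • x)) := by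
          rw [smul_smul, inv_mul_cancel₀ h1c, one_smul]
      _ = (1 + c)⁻¹ • A⁻¹.mulVec (A.mulVec (Am⁻¹.mulVec x)) := by
          rw [key, Matrix.mulVec_smul]
      _ = (1 + c)⁻¹ • Am⁻¹.mulVec x := by
          rw [Matrix.mulVec_mulVec, A.nonsing_inv_mul hAu, Matrix.one_mulVec]
  have hAsymm : A⁻¹ᵀ = A⁻¹ := by
    rw [Matrix.transpose_nonsing_inv]
    congr 1
    simpa using hA.isHermitian.eq
  have hAmsymm : Am⁻¹ᵀ = Am⁻¹ := by
    rw [Matrix.transpose_nonsing_inv]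
    congr 1
    simpa using hAm.isHermitian.eq
  have quad : ∀ (M : Matrix (Fin n) (Fin n) ℝ), Mᵀ = M →
      x ⬝ᵥ ((M * M).mulVec x) = (M.mulVec x) ⬝ᵥ (M.mulVec x) := by
    intro M hM
    rw [← Matrix.mulVec_mulVec, Matrix.dotProduct_mulVec, ← Matrix.mulVec_transpose, hM]
  have hq : x ⬝ᵥ ((A⁻¹ * A⁻¹).mulVec x) =
      (x ⬝ᵥ ((Am⁻¹ * Am⁻¹).mulVec x)) / (1 + c) ^ 2 := by
    rw [quad _ hAsymm, quad _ hAmsymm, hAinvx, dotProduct_smul,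
      smul_dotProduct, smul_eq_mul, smul_eq_mul]
    generalize (Am⁻¹.mulVec x) ⬝ᵥ (Am⁻¹.mulVec x) = d
    rw [sq, div_eq_mul_inv, mul_inv]
    ring
  refine ⟨hq, hq.le.trans ?_⟩
  have hnum : 0 ≤ x ⬝ᵥ ((Am⁻¹ * Am⁻¹).mulVec x) := by
    rw [quad _ hAmsymm]
    exact dotProduct_self_nonneg' _
  exact div_le_div_of_nonneg_left hnum (by positivity) (by nlinarith)
end
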